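/- (Closed form of the exponential map of SE_K(3).) Fix K ∈ ℕ with K ≥ 1. For φ ∈ ℝ³ and ξ₁, …, ξ_K ∈ ℝ³, let Ĥ(φ, ξ₁,…,ξ_K) denote the (3+K)×(3+K) real matrix whose top-left 3×3 block is φ̂, whose (3+i)-th column has top three entries equal to ξᵢ for i = 1,…,K, and whose remaining entries are zero. Then exp_m(Ĥ(φ, ξ₁,…,ξ_K)) equals the (3+K)×(3+K) matrix whose top-left 3×3 block is Γ₀(φ) = exp_m(φ̂), whose (3+i)-th column has top three entries Γ₁(φ) ξᵢ for i = 1,…,K, whose bottom-right K×K block is the identity, and whose remaining entries are zero. -/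

import Mathlib

open Matrix

/-- The skew-symmetric (hat) matrix of a vector `φ ∈ ℝ³`, so that `skew φ *ᵥ x = φ × x`. -/
noncomputable def skew (φ : Fin 3 → ℝ) : Matrix (Fin 3) (Fin 3) ℝ :=
  !![0, -φ 2, φ 1; φ 2, 0, -φ 0; -φ 1, φ 0, 0]

/-- `Γₘ(φ) = Σ_{n=0}^∞ (1/(n+m)!) φ̂ⁿ`. -/
noncomputable def Gamma (m : ℕ) (φ : Fin 3 → ℝ) : Matrix (Fin 3) (Fin 3) ℝ :=
  ∑' n : ℕ, (((n + m).factorial : ℝ))⁻¹ • skew φ ^ n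

/-- The Lie-algebra element `Ĥ(φ, ξ₁, …, ξ_K)` of `se_K(3)`: the `(3+K)×(3+K)` matrix with
top-left 3×3 block `φ̂`, whose `(3+i)`-th column has top three entries `ξᵢ`, and whose
remaining entries are zero. -/
noncomputable def seHat (K : ℕ) (φ : Fin 3 → ℝ) (ξ : Fin K → Fin 3 → ℝ) :
    Matrix (Fin (3 + K)) (Fin (3 + K)) ℝ := fun i j =>
  if hi : (i : ℕ) < 3 then
    if hj : (j : ℕ) < 3 then skew φ ⟨i, hi⟩ ⟨j, hj⟩
    else ξ ⟨(j : ℕ) - 3, by have := j.isLt; omega⟩ ⟨i, hi⟩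
  else 0

/-! ### Auxiliary lemmas -/

lemma matrix_tsum_apply {ι m n : Type*} {f : ι → Matrix m n ℝ} (hf : Summable f)
    (a : m) (b : n) : (∑' i, f i) a b = ∑' i, f i a b := by
  have h1 : ∀ x, HasSum (fun i => f i x) ((∑' i, f i) x) := Pi.hasSum.mp hf.hasSum
  have h2 := Pi.hasSum.mp (h1 a) b
  exact h2.tsum_eq.symm

lemma skew_pow_bound (φ : Fin 3 → ℝ) :
    ∃ D : ℝ, 0 ≤ D ∧ ∀ n (a b : Fin 3), |(skew φ ^ n) a b| ≤ D ^ n := by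
  set C := |φ 0| + |φ 1| + |φ 2| with hC
  have h0 := abs_nonneg (φ 0); have h1 := abs_nonneg (φ 1); have h2 := abs_nonneg (φ 2)
  have hC0 : 0 ≤ C := by positivity
  have hent : ∀ a b : Fin 3, |skew φ a b| ≤ C := by
    intro a b
    fin_cases a <;> fin_cases b <;> simp [skew, abs_neg] <;>
      linarith [abs_nonneg (φ 0), abs_nonneg (φ 1), abs_nonneg (φ 2)]
  refine ⟨3 * C + 1, by positivity, ?_⟩
  intro n
  induction n with
  | zero =>
    intro a b
    simp only [pow_zero, Matrix.one_apply]
    split <;> simp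
  | succ n ih =>
    intro a b
    rw [pow_succ, Matrix.mul_apply]
    have hD0 : (0:ℝ) ≤ 3 * C + 1 := by positivity
    calc |∑ k, (skew φ ^ n) a k * skew φ k b| ≤ ∑ k, |(skew φ ^ n) a k * skew φ k b| :=
          Finset.abs_sum_le_sum_abs _ _
      _ ≤ ∑ _k : Fin 3, (3 * C + 1) ^ n * C := by
          refine Finset.sum_le_sum fun k _ => ?_
          rw [abs_mul]
          exact mul_le_mul (ih a k) (hent k b) (abs_nonneg _) (pow_nonneg hD0 n)
      _ ≤ (3 * C + 1) ^ (n + 1) := by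
          rw [Finset.sum_const, Finset.card_univ, Fintype.card_fin, nsmul_eq_mul, pow_succ]
          have := pow_nonneg hD0 n
          push_cast
          nlinarith

lemma skew_summable (φ : Fin 3 → ℝ) (m : ℕ) (a b : Fin 3) :
    Summable fun n : ℕ => (((n + m).factorial : ℝ))⁻¹ * (skew φ ^ n) a b := by
  obtain ⟨D, hD0, hD⟩ := skew_pow_bound φ
  apply Summable.of_abs
  apply Summable.of_nonneg_of_le (fun n => abs_nonneg _) _ (Real.summable_pow_div_factorial D)
  intro n
  have hfac : (0:ℝ) < (n.factorial : ℝ) := by exact_mod_cast n.factorial_pos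
  have h1 : (n.factorial : ℝ) ≤ ((n + m).factorial : ℝ) := by
    exact_mod_cast Nat.factorial_le (Nat.le_add_right n m)
  have h2 : (((n + m).factorial : ℝ))⁻¹ ≤ ((n.factorial : ℝ))⁻¹ := inv_anti₀ hfac h1
  rw [abs_mul, abs_inv, abs_of_nonneg (le_of_lt (by exact_mod_cast (n+m).factorial_pos))]
  calc (((n + m).factorial : ℝ))⁻¹ * |(skew φ ^ n) a b| ≤ ((n.factorial : ℝ))⁻¹ * D ^ n :=
        mul_le_mul h2 (hD n a b) (abs_nonneg _) (by positivity)
    _ = D ^ n / (n.factorial : ℝ) := by rw [div_eq_mul_inv, mul_comm]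

lemma gamma_matrix_summable (φ : Fin 3 → ℝ) (m : ℕ) :
    Summable fun n : ℕ => (((n + m).factorial : ℝ))⁻¹ • skew φ ^ n := by
  refine Pi.summable.mpr fun a => Pi.summable.mpr fun b => ?_
  simpa [Matrix.smul_apply, smul_eq_mul] using skew_summable φ m a b

lemma Gamma_apply (m : ℕ) (φ : Fin 3 → ℝ) (a b : Fin 3) :
    Gamma m φ a b = ∑' n : ℕ, (((n + m).factorial : ℝ))⁻¹ * (skew φ ^ n) a b := by
  rw [Gamma, matrix_tsum_apply (gamma_matrix_summable φ m)]
  exact tsum_congr fun n => by simp [Matrix.smul_apply, smul_eq_mul]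

lemma exp_skew_apply (φ : Fin 3 → ℝ) (a b : Fin 3) :
    NormedSpace.exp (skew φ) a b = ∑' n : ℕ, ((n.factorial : ℝ))⁻¹ * (skew φ ^ n) a b := by
  have hs : Summable fun n : ℕ => ((n.factorial : ℝ))⁻¹ • skew φ ^ n := by
    simpa using gamma_matrix_summable φ 0
  rw [NormedSpace.exp_eq_tsum (𝕂 := ℝ)]
  exact (matrix_tsum_apply hs a b).trans
    (tsum_congr fun n => by simp [Matrix.smul_apply, smul_eq_mul])

lemma seHat_pow (K : ℕ) (φ : Fin 3 → ℝ) (ξ : Fin K → Fin 3 → ℝ) (n : ℕ) :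
    seHat K φ ξ ^ (n + 1) = fun (i j : Fin (3 + K)) =>
      if hi : (i : ℕ) < 3 then
        if hj : (j : ℕ) < 3 then (skew φ ^ (n + 1)) ⟨i, hi⟩ ⟨j, hj⟩
        else ((skew φ ^ n) *ᵥ ξ ⟨(j : ℕ) - 3, by have := j.isLt; omega⟩) ⟨i, hi⟩
      else 0 := by
  induction n with
  | zero =>
    rw [pow_one]
    ext i j
    simp [seHat, Matrix.one_mulVec]
  | succ n ih =>
    rw [pow_succ, ih]
    ext i j
    erw [Matrix.mul_apply, Fin.sum_univ_add]
    have h2 : ∀ k : Fin K, seHat K φ ξ (Fin.natAdd 3 k) j = 0 := by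
      intro k
      have : ¬ ((Fin.natAdd 3 k : ℕ) < 3) := by simp
      simp [seHat, this]
    have h2' : ∀ k : Fin K, ¬ ((Fin.natAdd 3 k : ℕ) < 3) := fun k => by simp
    by_cases hi : (i : ℕ) < 3
    · by_cases hj : (j : ℕ) < 3
      · simp only [seHat, hi, hj, Fin.coe_castAdd, Fin.is_lt, dite_true, Fin.eta, h2, h2',
          dite_false, mul_zero, Finset.sum_const_zero, add_zero, dif_pos]
        rw [pow_succ (skew φ) (n + 1), Matrix.mul_apply]
      · simp only [seHat, hi, hj, Fin.coe_castAdd, Fin.is_lt, dite_true, dite_false, Fin.eta,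
          h2, h2', mul_zero, Finset.sum_const_zero, add_zero, dif_pos]
        rw [Matrix.mulVec, dotProduct]
    · simp [hi, h2]

lemma seHat_pow_tl (K : ℕ) (φ : Fin 3 → ℝ) (ξ : Fin K → Fin 3 → ℝ) {i j : Fin (3 + K)}
    (hi : (i : ℕ) < 3) (hj : (j : ℕ) < 3) (n : ℕ) :
    (seHat K φ ξ ^ n) i j = (skew φ ^ n) ⟨i, hi⟩ ⟨j, hj⟩ := by
  cases n with
  | zero => simp [Matrix.one_apply, Fin.ext_iff]
  | succ n => rw [seHat_pow]; simp [hi, hj]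

lemma seHat_pow_tr (K : ℕ) (φ : Fin 3 → ℝ) (ξ : Fin K → Fin 3 → ℝ) {i j : Fin (3 + K)}
    (hi : (i : ℕ) < 3) (hj : ¬ (j : ℕ) < 3) (n : ℕ) :
    (seHat K φ ξ ^ (n + 1)) i j
      = ((skew φ ^ n) *ᵥ ξ ⟨(j : ℕ) - 3, by have := j.isLt; omega⟩) ⟨i, hi⟩ := by
  rw [seHat_pow]; simp [hi, hj]

lemma seHat_pow_bot (K : ℕ) (φ : Fin 3 → ℝ) (ξ : Fin K → Fin 3 → ℝ) {i j : Fin (3 + K)}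
    (hi : ¬ (i : ℕ) < 3) (n : ℕ) : (seHat K φ ξ ^ (n + 1)) i j = 0 := by
  rw [seHat_pow]; simp [hi]

/-- **Closed form of the exponential map of `SE_K(3)`.**
`exp_m(Ĥ(φ, ξ₁,…,ξ_K))` has top-left block `Γ₀(φ) = exp_m(φ̂)`, `(3+i)`-th column with top
three entries `Γ₁(φ) ξᵢ`, bottom-right `K×K` identity block, and zeros elsewhere. -/
theorem se_K_exp_closed_form (K : ℕ) (hK : 1 ≤ K)
    (φ : Fin 3 → ℝ) (ξ : Fin K → Fin 3 → ℝ) :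
    NormedSpace.exp (seHat K φ ξ) = fun (i j : Fin (3 + K)) =>
      if hi : (i : ℕ) < 3 then
        if hj : (j : ℕ) < 3 then NormedSpace.exp (skew φ) ⟨i, hi⟩ ⟨j, hj⟩
        else (Gamma 1 φ *ᵥ ξ ⟨(j : ℕ) - 3, by have := j.isLt; omega⟩) ⟨i, hi⟩
      else if (i : ℕ) = (j : ℕ) then 1 else 0 := by
  set H := seHat K φ ξ with hH
  -- the closed form of the top-right entries of `H ^ (n+1)`, expanded as a finite sum
  have hform : ∀ (i j : Fin (3 + K)) (hi : (i : ℕ) < 3) (hj : ¬ (j : ℕ) < 3) (n : ℕ),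
      (((n + 1).factorial : ℝ))⁻¹ * (H ^ (n + 1)) i j
        = ∑ k : Fin 3, ((((n + 1).factorial : ℝ))⁻¹ * (skew φ ^ n) ⟨i, hi⟩ k)
            * ξ ⟨(j : ℕ) - 3, by have := j.isLt; omega⟩ k := by
    intro i j hi hj n
    rw [seHat_pow_tr K φ ξ hi hj, Matrix.mulVec, dotProduct, Finset.mul_sum]
    exact Finset.sum_congr rfl fun k _ => by ring
  -- entrywise summability of the exponential series
  have hentry : ∀ i j : Fin (3 + K),
      Summable fun n : ℕ => ((n.factorial : ℝ))⁻¹ * (H ^ n) i j := by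
    intro i j
    by_cases hi : (i : ℕ) < 3
    · by_cases hj : (j : ℕ) < 3
      · refine Summable.congr ?_ fun n =>
          congrArg (((n.factorial : ℝ))⁻¹ * ·) (seHat_pow_tl K φ ξ hi hj n).symm
        simpa using skew_summable φ 0 ⟨i, hi⟩ ⟨j, hj⟩
      · rw [← summable_nat_add_iff 1]
        refine Summable.congr ?_ fun n => (hform i j hi hj n).symm
        exact summable_sum fun k _ => (skew_summable φ 1 ⟨i, hi⟩ k).mul_right _
    · apply (summable_nat_add_iff 1).mp
      exact Summable.congr summable_zero fun n => by rw [seHat_pow_bot K φ ξ hi]; ring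
  have hmat : Summable fun n : ℕ => ((n.factorial : ℝ))⁻¹ • H ^ n :=
    Pi.summable.mpr fun i => Pi.summable.mpr fun j => by
      simpa [Matrix.smul_apply, smul_eq_mul] using hentry i j
  have key : ∀ i j : Fin (3 + K),
      (∑' n : ℕ, ((n.factorial : ℝ))⁻¹ • H ^ n) i j
        = ∑' n : ℕ, ((n.factorial : ℝ))⁻¹ * (H ^ n) i j := fun i j =>
    (matrix_tsum_apply hmat i j).trans
      (tsum_congr fun n => by simp [Matrix.smul_apply, smul_eq_mul])
  rw [NormedSpace.exp_eq_tsum (𝕂 := ℝ)]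
  refine funext fun i => funext fun j => ?_
  show (∑' n : ℕ, ((n.factorial : ℝ))⁻¹ • H ^ n) i j = _
  rw [key i j]
  by_cases hi : (i : ℕ) < 3
  · by_cases hj : (j : ℕ) < 3
    · rw [dif_pos hi, dif_pos hj, exp_skew_apply]
      exact tsum_congr fun n => by rw [seHat_pow_tl K φ ξ hi hj]
    · rw [dif_pos hi, dif_neg hj]
      rw [Summable.tsum_eq_zero_add (hentry i j)]
      have hz0 : ((Nat.factorial 0 : ℝ))⁻¹ * (H ^ 0) i j = 0 := by
        have hne : i ≠ j := fun h => hj (h ▸ hi)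
        simp [Matrix.one_apply, hne]
      rw [hz0, zero_add, tsum_congr (hform i j hi hj),
        Summable.tsum_finsetSum fun k _ => (skew_summable φ 1 ⟨i, hi⟩ k).mul_right _]
      rw [Matrix.mulVec, dotProduct]
      refine Finset.sum_congr rfl fun k _ => ?_
      rw [tsum_mul_right, ← Gamma_apply]
  · rw [dif_neg hi, Summable.tsum_eq_zero_add (hentry i j)]
    have hz : ∀ n : ℕ, (((n + 1).factorial : ℝ))⁻¹ * (H ^ (n + 1)) i j = 0 := fun n => by
      rw [seHat_pow_bot K φ ξ hi]; ring
    simp only [hz, tsum_zero, add_zero]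
    simp [Matrix.one_apply, Fin.ext_iff]
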